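/- arXiv:1701.01337 — 3 statements merged into one kernel-verified Lean document; each statement's English description precedes it below -/
import Mathlib

section
/- Let G be a graph with h(G) = bw(G) and let d^opt ∈ ℝ^n satisfy g(G,d^opt) = bw(G) and ∑_i d^opt_i ≥ 4·bw(G) − 2|E|. Set B^opt = A + diag(d^opt). Then λ_S(B^opt) ≥ 0 and every optimum bisection vector y (i.e., every bisection vector y with cw(y) = bw(G)) is an eigenvector of P·B^opt·P corresponding to the eigenvalue λ_S(B^opt), i.e., P·B^opt·P·y = λ_S(B^opt)·y. -/
open Matrix BigOperators Finset

noncomputable section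

/-- Adjacency matrix of a graph on `Fin n`, with real entries. -/
def adjA {n : ℕ} (G : SimpleGraph (Fin n)) [DecidableRel G.Adj] :
    Matrix (Fin n) (Fin n) ℝ :=
  Matrix.of fun i j => if G.Adj i j then (1 : ℝ) else 0

/-- A bisection vector: entries in `{+1, -1}` summing to zero. -/
def IsBisection {n : ℕ} (x : Fin n → ℝ) : Prop :=
  (∀ i, x i = 1 ∨ x i = -1) ∧ ∑ i, x i = 0

/-- Cut width of a `±1` vector: `∑_{{i,j}∈E} (1 - x_i x_j)/2`, written as a sum
over ordered pairs (each edge counted twice, hence the `/4`). -/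
def cw {n : ℕ} (G : SimpleGraph (Fin n)) [DecidableRel G.Adj] (x : Fin n → ℝ) : ℝ :=
  (∑ i, ∑ j, adjA G i j * (1 - x i * x j)) / 4

/-- Bisection width: minimum cut width over all bisection vectors. -/
def bw {n : ℕ} (G : SimpleGraph (Fin n)) [DecidableRel G.Adj] : ℝ :=
  sInf {c | ∃ x : Fin n → ℝ, IsBisection x ∧ cw G x = c}

/-- `λ_S(B)`: supremum of the Rayleigh quotient of `B` over nonzero vectors of
coordinate sum zero. -/
def lamS {n : ℕ} (B : Matrix (Fin n) (Fin n) ℝ) : ℝ :=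
  sSup {r | ∃ x : Fin n → ℝ, x ≠ 0 ∧ ∑ i, x i = 0 ∧
    r = (x ⬝ᵥ B.mulVec x) / (∑ i, (x i) ^ 2)}

/-- Sum of all entries of a matrix. -/
def msum {n : ℕ} (M : Matrix (Fin n) (Fin n) ℝ) : ℝ := ∑ i, ∑ j, M i j

/-- Boppana's function `g(G,d)`. -/
def gB {n : ℕ} (G : SimpleGraph (Fin n)) [DecidableRel G.Adj] (d : Fin n → ℝ) : ℝ :=
  (msum (adjA G + Matrix.diagonal d) - n * lamS (adjA G + Matrix.diagonal d)) / 4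

/-- Boppana's lower bound `h(G) = sup_d g(G,d)`. -/
def hB {n : ℕ} (G : SimpleGraph (Fin n)) [DecidableRel G.Adj] : ℝ :=
  sSup {r | ∃ d : Fin n → ℝ, r = gB G d}

/-- Number of edges of `G`. -/
def edgeCount {n : ℕ} (G : SimpleGraph (Fin n)) [DecidableRel G.Adj] : ℕ :=
  G.edgeFinset.card

/-- The all-ones matrix `J`. -/
def Jmat (n : ℕ) : Matrix (Fin n) (Fin n) ℝ := Matrix.of fun _ _ => (1 : ℝ)

/-- The projection matrix `P = I - J/n`. -/
def Pmat (n : ℕ) : Matrix (Fin n) (Fin n) ℝ := 1 - (n : ℝ)⁻¹ • Jmat n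


lemma dot_symm {n : ℕ} (N : Matrix (Fin n) (Fin n) ℝ) (h : ∀ i j, N i j = N j i)
    (u v : Fin n → ℝ) : u ⬝ᵥ N.mulVec v = v ⬝ᵥ N.mulVec u := by
  simp only [dotProduct, Matrix.mulVec, Finset.mul_sum]
  rw [Finset.sum_comm]
  refine Finset.sum_congr rfl fun i _ => Finset.sum_congr rfl fun j _ => ?_
  rw [h j i]; ring

lemma dot_mulVec_shift {n : ℕ} (P : Matrix (Fin n) (Fin n) ℝ) (h : ∀ i j, P i j = P j i)
    (z w : Fin n → ℝ) : z ⬝ᵥ P.mulVec w = (P.mulVec z) ⬝ᵥ w := by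
  rw [Matrix.dotProduct_mulVec]
  congr 1
  funext i
  simp only [Matrix.vecMul, Matrix.mulVec, dotProduct]
  exact Finset.sum_congr rfl fun j _ => by rw [h i j]; ring

lemma sum_sq_pos {n : ℕ} {x : Fin n → ℝ} (hx : x ≠ 0) : 0 < ∑ i, (x i) ^ 2 := by
  rcases Function.ne_iff.mp hx with ⟨i, hi⟩
  have h1 : 0 < (x i) ^ 2 := lt_of_le_of_ne (sq_nonneg _) (Ne.symm (pow_ne_zero 2 hi))
  exact lt_of_lt_of_le h1 (Finset.single_le_sum (f := fun j => (x j) ^ 2)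
    (fun j _ => sq_nonneg _) (Finset.mem_univ i))

lemma psd_kernel {n : ℕ} (N : Matrix (Fin n) (Fin n) ℝ) (h : ∀ i j, N i j = N j i)
    (hpsd : ∀ z, 0 ≤ z ⬝ᵥ N.mulVec z) (y : Fin n → ℝ) (hy : y ⬝ᵥ N.mulVec y = 0) :
    N.mulVec y = 0 := by
  have key : ∀ z : Fin n → ℝ, z ⬝ᵥ N.mulVec y = 0 := by
    intro z
    set c := z ⬝ᵥ N.mulVec y with hc
    set a := z ⬝ᵥ N.mulVec z with ha
    have ha0 : 0 ≤ a := hpsd z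
    by_contra hc0
    have h1 : (0:ℝ) < a + 1 := by linarith
    set t : ℝ := -c / (a + 1) with ht
    have hexp := hpsd (y + t • z)
    have hcross : y ⬝ᵥ N.mulVec z = c := by rw [hc]; exact dot_symm N h y z
    simp only [Matrix.mulVec_add, Matrix.mulVec_smul, dotProduct_add,
      add_dotProduct, dotProduct_smul, smul_dotProduct,
      smul_eq_mul] at hexp
    rw [hy, hcross, ← hc, ← ha] at hexp
    have hc2 : 0 < c ^ 2 := by positivity
    rw [ht] at hexp
    have h2 : 0 + -c / (a + 1) * c + -c / (a + 1) * (c + -c / (a + 1) * a)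
        = (c ^ 2 * (-(a + 2))) / (a + 1) ^ 2 := by field_simp; ring
    rw [h2] at hexp
    have h4 : c ^ 2 * (-(a + 2)) / (a + 1) ^ 2 < 0 :=
      div_neg_of_neg_of_pos (by nlinarith) (by positivity)
    linarith
  have h3 := key (N.mulVec y)
  exact (dotProduct_self_eq_zero).mp h3

lemma quad_le_const {n : ℕ} (B : Matrix (Fin n) (Fin n) ℝ) (x : Fin n → ℝ) :
    x ⬝ᵥ B.mulVec x ≤ (∑ i, ∑ j, |B i j|) * ∑ i, (x i) ^ 2 := by
  have hR : (∑ i, ∑ j, |B i j|) * (∑ i, (x i) ^ 2)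
      = ∑ i, ∑ j, |B i j| * ∑ k, (x k) ^ 2 := by
    rw [Finset.sum_mul]
    exact Finset.sum_congr rfl fun i _ => Finset.sum_mul _ _ _
  rw [hR]
  simp only [dotProduct, Matrix.mulVec, Finset.mul_sum]
  refine Finset.sum_le_sum fun i _ => Finset.sum_le_sum fun j _ => ?_
  have hi : (x i) ^ 2 ≤ ∑ k, (x k) ^ 2 :=
    Finset.single_le_sum (f := fun k => (x k) ^ 2) (fun k _ => sq_nonneg _) (Finset.mem_univ i)
  have hj : (x j) ^ 2 ≤ ∑ k, (x k) ^ 2 :=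
    Finset.single_le_sum (f := fun k => (x k) ^ 2) (fun k _ => sq_nonneg _) (Finset.mem_univ j)
  have habs : x i * (B i j * x j) ≤ |B i j| * (|x i| * |x j|) := by
    calc x i * (B i j * x j) ≤ |x i * (B i j * x j)| := le_abs_self _
    _ = |B i j| * (|x i| * |x j|) := by rw [abs_mul, abs_mul]; ring
  have hxx : |x i| * |x j| ≤ ∑ k, (x k) ^ 2 := by
    nlinarith [abs_nonneg (x i), abs_nonneg (x j), sq_abs (x i), sq_abs (x j)]
  rw [← Finset.mul_sum]
  nlinarith [abs_nonneg (B i j)]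

lemma lamS_bdd {n : ℕ} (B : Matrix (Fin n) (Fin n) ℝ) :
    BddAbove {r | ∃ x : Fin n → ℝ, x ≠ 0 ∧ ∑ i, x i = 0 ∧
      r = (x ⬝ᵥ B.mulVec x) / (∑ i, (x i) ^ 2)} := by
  refine ⟨∑ i, ∑ j, |B i j|, ?_⟩
  rintro r ⟨x, hx0, -, rfl⟩
  have hs := sum_sq_pos hx0
  rw [div_le_iff₀ hs]
  exact quad_le_const B x

lemma quad_le_lamS {n : ℕ} (B : Matrix (Fin n) (Fin n) ℝ) (z : Fin n → ℝ)
    (hz : ∑ i, z i = 0) : z ⬝ᵥ B.mulVec z ≤ lamS B * ∑ i, (z i) ^ 2 := by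
  by_cases h0 : z = 0
  · subst h0; simp
  · have hS := sum_sq_pos h0
    have hmem : (z ⬝ᵥ B.mulVec z) / (∑ i, (z i) ^ 2) ∈
        {r | ∃ x : Fin n → ℝ, x ≠ 0 ∧ ∑ i, x i = 0 ∧
          r = (x ⬝ᵥ B.mulVec x) / (∑ i, (x i) ^ 2)} := ⟨z, h0, hz, rfl⟩
    have hle := le_csSup (lamS_bdd B) hmem
    rw [div_le_iff₀ hS] at hle
    calc z ⬝ᵥ B.mulVec z ≤ lamS B * ∑ i, (z i) ^ 2 := hle

lemma Pmat_mulVec {n : ℕ} (z : Fin n → ℝ) (i : Fin n) :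
    (Pmat n).mulVec z i = z i - (∑ j, z j) / n := by
  rw [Pmat, Matrix.sub_mulVec, Matrix.smul_mulVec, Matrix.one_mulVec]
  simp only [Pi.sub_apply, Pi.smul_apply, smul_eq_mul, Matrix.mulVec, dotProduct,
    Jmat, Matrix.of_apply, one_mul, div_eq_inv_mul]

lemma Pmat_sum {n : ℕ} (hn : (n:ℝ) ≠ 0) (z : Fin n → ℝ) :
    ∑ i, (Pmat n).mulVec z i = 0 := by
  simp only [Pmat_mulVec, Finset.sum_sub_distrib, Finset.sum_const, Finset.card_univ,
    Fintype.card_fin, nsmul_eq_mul]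
  field_simp
  ring

lemma Pmat_fix {n : ℕ} {z : Fin n → ℝ} (hz : ∑ i, z i = 0) :
    (Pmat n).mulVec z = z := by
  funext i
  rw [Pmat_mulVec, hz]
  simp

lemma Pmat_norm_le {n : ℕ} (hn : (0:ℝ) < n) (z : Fin n → ℝ) :
    ∑ i, ((Pmat n).mulVec z i) ^ 2 ≤ ∑ i, (z i) ^ 2 := by
  have hexp : ∀ i : Fin n, ((Pmat n).mulVec z i) ^ 2
      = (z i) ^ 2 - 2 * ((∑ j, z j) / n) * z i + ((∑ j, z j) / n) ^ 2 := by
    intro i; rw [Pmat_mulVec]; ring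
  rw [Finset.sum_congr rfl fun i _ => hexp i]
  have hne : (n:ℝ) ≠ 0 := ne_of_gt hn
  simp only [Finset.sum_add_distrib, Finset.sum_sub_distrib, Finset.sum_const,
    Finset.card_univ, Fintype.card_fin, nsmul_eq_mul, ← Finset.mul_sum]
  have h3 : 0 ≤ (∑ j, z j) ^ 2 / n := by positivity
  have key : 2 * ((∑ j, z j) / ↑n) * ∑ j, z j - (n:ℝ) * ((∑ j, z j) / ↑n) ^ 2
      = (∑ j, z j) ^ 2 / n := by field_simp; ring
  linarith [h3, key]

lemma msum_adjA {n : ℕ} (G : SimpleGraph (Fin n)) [DecidableRel G.Adj] :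
    msum (adjA G) = 2 * (edgeCount G : ℝ) := by
  unfold msum adjA edgeCount
  have hdeg : ∀ i : Fin n, ∑ j, (Matrix.of fun i j => if G.Adj i j then (1:ℝ) else 0) i j
      = (G.degree i : ℝ) := by
    intro i
    simp only [Matrix.of_apply, Finset.sum_boole]
    rw [SimpleGraph.degree, SimpleGraph.neighborFinset_eq_filter]
  rw [Finset.sum_congr rfl fun i _ => hdeg i]
  rw [← Nat.cast_sum]
  rw_mod_cast [SimpleGraph.sum_degrees_eq_twice_card_edges]

lemma Pmat_symm {n : ℕ} : ∀ i j, Pmat n i j = Pmat n j i := by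
  intro i j
  simp [Pmat, Jmat, Matrix.sub_apply, Matrix.one_apply, eq_comm]

lemma adjA_symm {n : ℕ} (G : SimpleGraph (Fin n)) [DecidableRel G.Adj] (d : Fin n → ℝ) :
    ∀ i j, (adjA G + Matrix.diagonal d) i j = (adjA G + Matrix.diagonal d) j i := by
  intro i j
  rcases eq_or_ne i j with h | h
  · subst h; rfl
  · simp [adjA, Matrix.add_apply, Matrix.diagonal_apply_ne _ h,
      Matrix.diagonal_apply_ne _ h.symm, G.adj_comm]

theorem optimum_bisection_is_eigenvector {n : ℕ} (hn2 : 2 ≤ n) (hne : Even n)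
    (G : SimpleGraph (Fin n)) [DecidableRel G.Adj] (dopt : Fin n → ℝ)
    (hh : hB G = bw G) (hg : gB G dopt = bw G)
    (hsum : 4 * bw G - 2 * (edgeCount G : ℝ) ≤ ∑ i, dopt i) :
    0 ≤ lamS (adjA G + Matrix.diagonal dopt) ∧
    ∀ y : Fin n → ℝ, IsBisection y → cw G y = bw G →
      (Pmat n * (adjA G + Matrix.diagonal dopt) * Pmat n).mulVec y
        = lamS (adjA G + Matrix.diagonal dopt) • y := by
  have hn0 : (0:ℝ) < n := by
    have : 0 < n := lt_of_lt_of_le (by norm_num) hn2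
    exact_mod_cast this
  have hnne : (n:ℝ) ≠ 0 := ne_of_gt hn0
  set B := adjA G + Matrix.diagonal dopt with hBdef
  set lam := lamS B with hlamdef
  -- msum B = msum A + ∑ d
  have hmsumB : msum B = msum (adjA G) + ∑ i, dopt i := by
    unfold msum
    rw [hBdef]
    simp [Matrix.add_apply, Finset.sum_add_distrib, Matrix.diagonal_apply,
      Finset.sum_ite_eq, Finset.mem_univ]
  -- value of n * lam
  have hlamval : (n:ℝ) * lam = msum B - 4 * bw G := by
    have hgb := hg
    unfold gB at hgb
    rw [← hBdef, ← hlamdef] at hgb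
    linarith
  have hlam0 : 0 ≤ lam := by
    have h1 : 0 ≤ (n:ℝ) * lam := by
      rw [hlamval, hmsumB, msum_adjA G]
      linarith
    nlinarith
  refine ⟨hlam0, ?_⟩
  intro y hy hcwy
  -- facts about y
  have hsq : ∀ i, y i * y i = 1 := fun i => by
    rcases hy.1 i with h | h <;> rw [h] <;> norm_num
  have hyy : y ⬝ᵥ y = (n:ℝ) := by
    simp [dotProduct, hsq]
  have hysq : ∑ i, (y i) ^ 2 = (n:ℝ) := by
    have : ∀ i : Fin n, (y i) ^ 2 = 1 := fun i => by rw [sq]; exact hsq i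
    simp [this]
  -- quadratic form of adjA on y
  have hQA : y ⬝ᵥ (adjA G).mulVec y = msum (adjA G) - 4 * bw G := by
    have hc := hcwy
    unfold cw at hc
    have hexp : ∑ i, ∑ j, adjA G i j * (1 - y i * y j)
        = msum (adjA G) - y ⬝ᵥ (adjA G).mulVec y := by
      unfold msum
      simp only [dotProduct, Matrix.mulVec, Finset.mul_sum, ← Finset.sum_sub_distrib]
      refine Finset.sum_congr rfl fun i _ => Finset.sum_congr rfl fun j _ => ?_
      ring
    rw [hexp] at hc
    linarith
  -- quadratic form of B on y
  have hQB : y ⬝ᵥ B.mulVec y = (n:ℝ) * lam := by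
    rw [hBdef, Matrix.add_mulVec, dotProduct_add]
    have hdiag : y ⬝ᵥ (Matrix.diagonal dopt).mulVec y = ∑ i, dopt i := by
      simp only [dotProduct, Matrix.mulVec_diagonal]
      refine Finset.sum_congr rfl fun i _ => ?_
      rw [show y i * (dopt i * y i) = dopt i * (y i * y i) by ring, hsq i, mul_one]
    rw [hQA, hdiag, hlamval, hmsumB]
    ring
  -- symmetry of M = P B P
  have hBsymm : ∀ i j, B i j = B j i := adjA_symm G dopt
  set M := Pmat n * B * Pmat n with hMdef
  have hMsymm : ∀ i j, M i j = M j i := by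
    intro i j
    rw [hMdef]
    simp only [Matrix.mul_apply, Finset.sum_mul]
    rw [Finset.sum_comm]
    refine Finset.sum_congr rfl fun k _ => Finset.sum_congr rfl fun l _ => ?_
    rw [Pmat_symm i k, hBsymm k l, Pmat_symm l j]
    ring
  -- quadratic form transport: z ⬝ᵥ M z = (Pz) ⬝ᵥ B (Pz)
  have hMquad : ∀ z : Fin n → ℝ, z ⬝ᵥ M.mulVec z
      = ((Pmat n).mulVec z) ⬝ᵥ B.mulVec ((Pmat n).mulVec z) := by
    intro z
    rw [hMdef, ← Matrix.mulVec_mulVec, ← Matrix.mulVec_mulVec,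
      dot_mulVec_shift (Pmat n) Pmat_symm]
  -- N := lam • 1 - M is PSD
  have hNpsd : ∀ z : Fin n → ℝ,
      0 ≤ z ⬝ᵥ (lam • (1 : Matrix (Fin n) (Fin n) ℝ) - M).mulVec z := by
    intro z
    rw [Matrix.sub_mulVec, dotProduct_sub, Matrix.smul_mulVec,
      Matrix.one_mulVec, dotProduct_smul, smul_eq_mul]
    have h1 := hMquad z
    set w := (Pmat n).mulVec z with hw
    have h2 : w ⬝ᵥ B.mulVec w ≤ lam * ∑ i, (w i) ^ 2 :=
      quad_le_lamS B w (Pmat_sum hnne z)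
    have h3 : ∑ i, (w i) ^ 2 ≤ ∑ i, (z i) ^ 2 := Pmat_norm_le hn0 z
    have h4 : z ⬝ᵥ z = ∑ i, (z i) ^ 2 := by
      simp [dotProduct, sq]
    rw [h4, h1]
    nlinarith [mul_le_mul_of_nonneg_left h3 hlam0]
  -- N y = 0
  have hPy : (Pmat n).mulVec y = y := Pmat_fix hy.2
  have hNy : y ⬝ᵥ (lam • (1 : Matrix (Fin n) (Fin n) ℝ) - M).mulVec y = 0 := by
    rw [Matrix.sub_mulVec, dotProduct_sub, Matrix.smul_mulVec,
      Matrix.one_mulVec, dotProduct_smul, smul_eq_mul, hyy]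
    have hMy : y ⬝ᵥ M.mulVec y = (n:ℝ) * lam := by
      rw [hMquad y, hPy]; exact hQB
    rw [hMy]; ring
  have hNsymm : ∀ i j, (lam • (1 : Matrix (Fin n) (Fin n) ℝ) - M) i j
      = (lam • (1 : Matrix (Fin n) (Fin n) ℝ) - M) j i := by
    intro i j
    simp only [Matrix.sub_apply, Matrix.smul_apply, Matrix.one_apply, smul_eq_mul]
    rw [hMsymm i j]
    congr 1
    by_cases h : i = j
    · subst h; rfl
    · rw [if_neg h, if_neg (Ne.symm h)]
  have hker := psd_kernel _ hNsymm hNpsd y hNy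
  have hfin : (lam • (1 : Matrix (Fin n) (Fin n) ℝ)).mulVec y - M.mulVec y = 0 := by
    rw [← Matrix.sub_mulVec]; exact hker
  have : M.mulVec y = (lam • (1 : Matrix (Fin n) (Fin n) ℝ)).mulVec y := by
    have := sub_eq_zero.mp hfin
    exact this.symm
  rw [this, Matrix.smul_mulVec, Matrix.one_mulVec]
end
end

section
/- Let G be a graph with n ≥ 10 vertices containing a path segment with edges {u',u}, {u,w}, {w,w'}, where the vertices u and w have no edges other than these (deg(u) = deg(w) = 2). If there is an optimum bisection vector y (cw(y) = bw(G)) such that y_u = y_{u'} = +1 and y_w = y_{w'} = −1 (so {u,w} is a cut edge), then h(G) < bw(G). -/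
open Matrix BigOperators Finset

noncomputable section

lemma sq_sum_pos {n : ℕ} (x : Fin n → ℝ) (hx : x ≠ 0) : 0 < ∑ i, (x i)^2 := by
  have h : ∃ i, x i ≠ 0 := by
    by_contra h; push_neg at h; exact hx (funext h)
  obtain ⟨i, hi⟩ := h
  exact Finset.sum_pos' (fun k _ => sq_nonneg _) ⟨i, Finset.mem_univ i, by positivity⟩

lemma quad_eq {n : ℕ} (B : Matrix (Fin n) (Fin n) ℝ) (x : Fin n → ℝ) :
    x ⬝ᵥ B.mulVec x = ∑ i, ∑ j, B i j * x i * x j := by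
  simp only [dotProduct, Matrix.mulVec, Finset.mul_sum]
  refine Finset.sum_congr rfl fun i _ => Finset.sum_congr rfl fun j _ => by ring

lemma ray_le {n : ℕ} (B : Matrix (Fin n) (Fin n) ℝ) (x : Fin n → ℝ) (hx : x ≠ 0)
    (h0 : ∑ i, x i = 0) :
    ∑ i, ∑ j, B i j * x i * x j ≤ lamS B * ∑ i, (x i)^2 := by
  have hS : 0 < ∑ i, (x i)^2 := sq_sum_pos x hx
  have hbdd : BddAbove {r | ∃ z : Fin n → ℝ, z ≠ 0 ∧ ∑ i, z i = 0 ∧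
      r = (z ⬝ᵥ B.mulVec z) / (∑ i, (z i) ^ 2)} := by
    refine ⟨∑ i, ∑ j, |B i j|, ?_⟩
    rintro r ⟨z, hz, -, rfl⟩
    have hSz : 0 < ∑ i, (z i)^2 := sq_sum_pos z hz
    rw [div_le_iff₀ hSz, quad_eq, Finset.sum_mul]
    refine Finset.sum_le_sum fun i _ => ?_
    rw [Finset.sum_mul]
    refine Finset.sum_le_sum fun j _ => ?_
    have h1 : (z i)^2 ≤ ∑ k, (z k)^2 :=
      Finset.single_le_sum (f := fun k => (z k)^2) (fun k _ => sq_nonneg _) (Finset.mem_univ i)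
    have h2 : (z j)^2 ≤ ∑ k, (z k)^2 :=
      Finset.single_le_sum (f := fun k => (z k)^2) (fun k _ => sq_nonneg _) (Finset.mem_univ j)
    have habs : |z i * z j| ≤ ∑ k, (z k)^2 := by
      rw [abs_mul]
      nlinarith [abs_nonneg (z i), abs_nonneg (z j), sq_abs (z i), sq_abs (z j),
        two_mul_le_add_sq |z i| |z j|, h1, h2]
    calc B i j * z i * z j ≤ |B i j * z i * z j| := le_abs_self _
      _ = |B i j| * |z i * z j| := by rw [mul_assoc, abs_mul]
      _ ≤ |B i j| * ∑ k, (z k)^2 := mul_le_mul_of_nonneg_left habs (abs_nonneg _)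
  have hmem : (x ⬝ᵥ B.mulVec x) / (∑ i, (x i) ^ 2) ∈ {r | ∃ z : Fin n → ℝ, z ≠ 0 ∧ ∑ i, z i = 0 ∧
      r = (z ⬝ᵥ B.mulVec z) / (∑ i, (z i) ^ 2)} := ⟨x, hx, h0, rfl⟩
  have hle := le_csSup hbdd hmem
  rw [div_le_iff₀ hS] at hle
  rw [← quad_eq]
  exact hle

lemma two_point_sum {n : ℕ} {u w : Fin n} (huw : u ≠ w) (a b : ℝ) (f : Fin n → ℝ) :
    ∑ i, ((if i = u then a else 0) + (if i = w then b else 0)) * f i = a * f u + b * f w := by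
  simp only [add_mul, ite_mul, zero_mul, Finset.sum_add_distrib,
    Finset.sum_ite_eq' Finset.univ, Finset.mem_univ, if_true]

lemma final_arith (N L s T b Q : ℝ) (hN : 10 ≤ N) (hb : 0 ≤ b)
    (hQ : Q = T - 4*b)
    (hC : 100*Q - 19*s - 2 ≤ L * (100*N - 38))
    (hD : N^2*s + 2*N^2 - 4*N*s - 16*N + 4*T ≤ L * (2*N^2 - 4*N))
    (hA : 4*b - 1/100 < T - N*L) : False := by
  subst hQ
  have hgap : 38 * L - 3 < 19 * s := by nlinarith [hC, hA]
  have hnn : (0:ℝ) < N^2 - 4*N := by nlinarith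
  have hprod : 0 < (N^2 - 4*N) * (19*s + 3 - 38*L) := mul_pos hnn (by linarith)
  have hq10 : 0 ≤ (N - 10) * N := by nlinarith
  nlinarith [hD, hA, hb, hprod, hq10, hN]

set_option maxHeartbeats 1000000

/-- a path segment `u' - u - w - w'` lying on an optimum
bisection (with `u`, `w` of degree two and `{u,w}` a cut edge) forces
`h(G) < bw(G)`. -/
theorem path_on_cut_forces_fail {n : ℕ} (hn2 : 2 ≤ n) (hne : Even n)
    (hn10 : 10 ≤ n)
    (G : SimpleGraph (Fin n)) [DecidableRel G.Adj]
    (u' u w w' : Fin n)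
    (e1 : G.Adj u' u) (e2 : G.Adj u w) (e3 : G.Adj w w')
    (hu : ∀ z, G.Adj u z ↔ z = u' ∨ z = w)
    (hw : ∀ z, G.Adj w z ↔ z = u ∨ z = w')
    (y : Fin n → ℝ) (hy : IsBisection y) (hopt : cw G y = bw G)
    (hyu : y u = 1) (hyu' : y u' = 1) (hyw : y w = -1) (hyw' : y w' = -1) :
    hB G < bw G := by
  have hyval := hy.1
  have hysum := hy.2
  have hy2 : ∀ i, (y i)^2 = 1 := fun i => by rcases hyval i with h | h <;> rw [h] <;> norm_num
  have hNu : u' ≠ w := fun h => by rw [h, hyw] at hyu'; norm_num at hyu'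
  have huw'ne : u ≠ w' := fun h => by rw [h, hyw'] at hyu; norm_num at hyu
  have huwne : u ≠ w := G.ne_of_adj e2
  have huu' : u ≠ u' := e1.ne'
  have hww' : w ≠ w' := G.ne_of_adj e3
  have hnR : (10:ℝ) ≤ (n:ℝ) := by exact_mod_cast hn10
  have hyy : ∑ i, (y i)^2 = (n:ℝ) := by
    rw [Finset.sum_congr rfl fun i _ => hy2 i]; simp
  -- bw is nonnegative
  have hbw0 : 0 ≤ bw G := by
    refine le_csInf ⟨cw G y, y, hy, rfl⟩ ?_
    rintro b ⟨x, hx, rfl⟩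
    have hnn : 0 ≤ ∑ i, ∑ j, adjA G i j * (1 - x i * x j) := by
      apply Finset.sum_nonneg; intro i _
      apply Finset.sum_nonneg; intro j _
      have h1 : (0:ℝ) ≤ adjA G i j := by
        unfold adjA; simp only [Matrix.of_apply]; split <;> norm_num
      have h2 : x i * x j ≤ 1 := by
        rcases hx.1 i with h | h <;> rcases hx.1 j with h' | h' <;> rw [h, h'] <;> norm_num
      nlinarith
    unfold cw; linarith
  -- key uniform gap
  have key : ∀ d : Fin n → ℝ, gB G d ≤ bw G - 1/400 := by
    intro d
    unfold gB
    set B : Matrix (Fin n) (Fin n) ℝ := adjA G + Matrix.diagonal d with hBdef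
    have hBij : ∀ i j, B i j = (if G.Adj i j then (1:ℝ) else 0) + (if i = j then d i else 0) := by
      intro i j
      simp [hBdef, adjA, Matrix.diagonal_apply, Matrix.add_apply]
    set L : ℝ := lamS B with hL
    clear_value L
    set T : ℝ := msum B with hT
    clear_value T
    set s : ℝ := d u + d w with hs
    clear_value s
    -- matrix entries
    have hBuu : B u u = d u := by simp [hBij u u]
    have hBww : B w w = d w := by simp [hBij w w]
    have hBuw : B u w = 1 := by simp [hBij u w, e2, huwne]
    have hBwu : B w u = 1 := by simp [hBij w u, e2.symm, huwne.symm]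
    -- row lemmas
    have hrowu : ∀ z : Fin n → ℝ, ∑ j, B u j * z j = z u' + z w + d u * z u := by
      intro z
      have hsplit : ∀ j, B u j * z j =
          ((if j = u' then z u' else 0) + (if j = w then z w else 0))
            + (if j = u then d u * z u else 0) := by
        intro j
        rw [hBij]
        rcases eq_or_ne j u' with h1 | h1 <;> rcases eq_or_ne j w with h2 | h2 <;>
          rcases eq_or_ne j u with h3 | h3 <;>
            simp_all [hu, eq_comm] <;> ring
      rw [Finset.sum_congr rfl fun j _ => hsplit j]
      simp [Finset.sum_add_distrib, Finset.sum_ite_eq' Finset.univ]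
    have hroww : ∀ z : Fin n → ℝ, ∑ j, B w j * z j = z u + z w' + d w * z w := by
      intro z
      have hsplit : ∀ j, B w j * z j =
          ((if j = u then z u else 0) + (if j = w' then z w' else 0))
            + (if j = w then d w * z w else 0) := by
        intro j
        rw [hBij]
        rcases eq_or_ne j u with h1 | h1 <;> rcases eq_or_ne j w' with h2 | h2 <;>
          rcases eq_or_ne j w with h3 | h3 <;>
            simp_all [hw, eq_comm] <;> ring
      rw [Finset.sum_congr rfl fun j _ => hsplit j]
      simp [Finset.sum_add_distrib, Finset.sum_ite_eq' Finset.univ]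
    have hBsym : ∀ i j, B i j = B j i := by
      intro i j
      rcases eq_or_ne i j with h | h
      · rw [h]
      · simp [hBij, G.adj_comm, h, h.symm]
    have hcolu : ∀ z : Fin n → ℝ, ∑ i, B i u * z i = z u' + z w + d u * z u := by
      intro z
      rw [Finset.sum_congr rfl fun i _ => by rw [hBsym i u]]
      exact hrowu z
    have hcolw : ∀ z : Fin n → ℝ, ∑ i, B i w * z i = z u + z w' + d w * z w := by
      intro z
      rw [Finset.sum_congr rfl fun i _ => by rw [hBsym i w]]
      exact hroww z
    -- the quadratic form of y
    set Q : ℝ := ∑ i, ∑ j, B i j * y i * y j with hQdef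
    clear_value Q
    have hQ : Q = T - 4 * bw G := by
      have hrow : ∀ i, ∑ j, B i j * y i * y j
          = (∑ j, adjA G i j * (y i * y j)) + d i := by
        intro i
        have : ∀ j, B i j * y i * y j
            = adjA G i j * (y i * y j) + (if i = j then d i * (y j)^2 else 0) := by
          intro j
          rw [hBij]
          rcases eq_or_ne i j with h | h
          · subst h; simp [adjA]; try ring
          · simp [adjA, h]; try ring
        rw [Finset.sum_congr rfl fun j _ => this j, Finset.sum_add_distrib]
        congr 1
        rw [Finset.sum_ite_eq Finset.univ i (fun j => d i * (y j)^2)]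
        simp [hy2 i]
      have hcut : ∑ i, ∑ j, adjA G i j * (y i * y j)
          = msum (adjA G) - 4 * cw G y := by
        have expand : ∀ i j, adjA G i j * (y i * y j)
            = adjA G i j - adjA G i j * (1 - y i * y j) := by intro i j; ring
        rw [Finset.sum_congr rfl fun i _ => Finset.sum_congr rfl fun j _ => expand i j]
        unfold cw msum
        rw [Finset.sum_congr rfl fun i _ => Finset.sum_sub_distrib (fun j => adjA G i j)
          (fun j => adjA G i j * (1 - y i * y j)), Finset.sum_sub_distrib]
        ring
      have hTsum : T = msum (adjA G) + ∑ i, d i := by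
        rw [hT, hBdef]
        unfold msum
        have : ∀ i, ∑ j, (adjA G + Matrix.diagonal d) i j
            = (∑ j, adjA G i j) + d i := by
          intro i
          simp only [Matrix.add_apply]
          rw [Finset.sum_add_distrib]
          congr 1
          simp [Matrix.diagonal_apply, Finset.sum_ite_eq Finset.univ]
        rw [Finset.sum_congr rfl fun i _ => this i, Finset.sum_add_distrib]
      rw [hQdef, Finset.sum_congr rfl fun i _ => hrow i, Finset.sum_add_distrib, hcut,
        hTsum, hopt]
      ring
    -- row/column sums
    have hrsu : ∑ j, B u j = d u + 2 := by
      have h := hrowu (fun _ => (1:ℝ)); simp only [mul_one] at h; linarith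
    have hrsw : ∑ j, B w j = d w + 2 := by
      have h := hroww (fun _ => (1:ℝ)); simp only [mul_one] at h; linarith
    have hcsu : ∑ i, B i u = d u + 2 := by
      have h := hcolu (fun _ => (1:ℝ)); simp only [mul_one] at h; linarith
    have hcsw : ∑ i, B i w = d w + 2 := by
      have h := hcolw (fun _ => (1:ℝ)); simp only [mul_one] at h; linarith
    have hTrows : T = ∑ i, ∑ j, B i j := by rw [hT]; rfl
    have hpull : ∀ (z : Fin n → ℝ) i, ∑ j, B i j * z i * z j = z i * ∑ j, B i j * z j := by
      intro z i; rw [Finset.mul_sum]; exact Finset.sum_congr rfl fun j _ => by ring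
    have hRyu : ∑ j, B u j * y j = d u := by rw [hrowu y, hyu', hyw, hyu]; ring
    have hRyw : ∑ j, B w j * y j = - d w := by rw [hroww y, hyu, hyw', hyw]; ring
    have hcolyu : ∑ i, B i u * y i = d u := by rw [hcolu y, hyu', hyw, hyu]; ring
    have hcolyw : ∑ i, B i w * y i = - d w := by rw [hcolw y, hyu, hyw', hyw]; ring
    -- first test vector
    set c : Fin n → ℝ := fun i => (if i = u then (-1:ℝ) else 0) + (if i = w then 1 else 0)
      with hc
    set Xc : Fin n → ℝ := fun i => 10 * y i + c i with hXc
    have hcu : c u = -1 := by simp [hc, huwne]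
    have hcw : c w = 1 := by simp [hc, huwne.symm]
    have hcsum : ∀ f : Fin n → ℝ, ∑ i, c i * f i = - f u + f w := by
      intro f
      have h2 := two_point_sum huwne (-1:ℝ) 1 f
      simp only [hc]
      simp only [neg_mul, one_mul] at h2 ⊢
      exact h2
    have hinnerXc : ∀ i, ∑ j, B i j * Xc j
        = 10 * (∑ j, B i j * y j) + (- B i u + B i w) := by
      intro i
      have hsum : ∑ j, B i j * Xc j = ∑ j, (10 * (B i j * y j) + c j * B i j) := by
        refine Finset.sum_congr rfl fun j _ => ?_
        simp only [hXc]; ring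
      rw [hsum, Finset.sum_add_distrib, ← Finset.mul_sum]
      congr 1
      exact hcsum (fun j => B i j)
    have hqc : ∑ i, ∑ j, B i j * Xc i * Xc j = 100*Q - 19*s - 2 := by
      have hexp : ∀ i, ∑ j, B i j * Xc i * Xc j
          = 100 * (y i * ∑ j, B i j * y j) + 10 * (- (B i u * y i) + B i w * y i)
            + 10 * (c i * ∑ j, B i j * y j) + c i * (- B i u + B i w) := by
        intro i
        rw [hpull Xc i, hinnerXc i]
        simp only [hXc]; ring
      rw [Finset.sum_congr rfl fun i _ => hexp i]
      rw [Finset.sum_add_distrib, Finset.sum_add_distrib, Finset.sum_add_distrib,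
        ← Finset.mul_sum, ← Finset.mul_sum, ← Finset.mul_sum]
      have h1 : ∑ i, y i * ∑ j, B i j * y j = Q := by
        rw [hQdef]
        exact (Finset.sum_congr rfl fun i _ => (hpull y i)).symm
      have h2 : ∑ i, (- (B i u * y i) + B i w * y i) = - d u + - d w := by
        rw [Finset.sum_add_distrib, Finset.sum_neg_distrib, hcolyu, hcolyw]
      have h3 : ∑ i, c i * ∑ j, B i j * y j = - d u + - d w := by
        have h := hcsum (fun i => ∑ j, B i j * y j)
        rw [h, hRyu, hRyw]
      have h4 : ∑ i, c i * (- B i u + B i w) = (d u + d w) - 2 := by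
        have h := hcsum (fun i => - B i u + B i w)
        rw [h, hBuu, hBuw, hBwu, hBww]; ring
      rw [h1, h2, h3, h4, hs]; ring
    have hSc : ∑ i, (Xc i)^2 = 100*(n:ℝ) - 38 := by
      have hexp2 : ∀ i, (Xc i)^2 = 100 * (y i)^2 + 20 * (c i * y i) + c i * c i := by
        intro i; simp only [hXc]; ring
      rw [Finset.sum_congr rfl fun i _ => hexp2 i, Finset.sum_add_distrib,
        Finset.sum_add_distrib, ← Finset.mul_sum, ← Finset.mul_sum, hyy,
        hcsum y, hcsum c, hyu, hyw, hcu, hcw]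
      ring
    have hXcsum : ∑ i, Xc i = 0 := by
      have hexp3 : ∀ i, Xc i = 10 * y i + c i * 1 := by intro i; simp only [hXc, mul_one]
      rw [Finset.sum_congr rfl fun i _ => hexp3 i, Finset.sum_add_distrib,
        ← Finset.mul_sum, hysum, hcsum (fun _ => 1)]
      ring
    have hXcne : Xc ≠ 0 := by
      intro h0
      have h9 : Xc u = 9 := by rw [hXc]; simp only []; rw [hyu, hcu]; ring
      rw [h0] at h9
      norm_num at h9
    have hC' := ray_le B Xc hXcne hXcsum
    rw [hqc, hSc, ← hL] at hC'
    -- second test vector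
    set g2 : Fin n → ℝ := fun i => (if i = u then (n:ℝ) else 0) + (if i = w then (n:ℝ) else 0)
      with hg2
    set Xd : Fin n → ℝ := fun i => g2 i + (-2) with hXd
    have hg2u : g2 u = n := by simp [hg2, huwne]
    have hg2w : g2 w = n := by simp [hg2, huwne.symm]
    have hg2sum : ∀ f : Fin n → ℝ, ∑ i, g2 i * f i = (n:ℝ) * f u + (n:ℝ) * f w := by
      intro f
      have h2 := two_point_sum huwne (n:ℝ) (n:ℝ) f
      simp only [hg2]
      exact h2
    have hinnerXd : ∀ i, ∑ j, B i j * Xd j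
        = ((n:ℝ) * B i u + (n:ℝ) * B i w) + (-2) * ∑ j, B i j := by
      intro i
      have hsum : ∑ j, B i j * Xd j = ∑ j, (g2 j * B i j + (-2) * B i j) := by
        refine Finset.sum_congr rfl fun j _ => ?_
        simp only [hXd]; ring
      rw [hsum, Finset.sum_add_distrib, ← Finset.mul_sum]
      congr 1
      exact hg2sum (fun j => B i j)
    have hqd : ∑ i, ∑ j, B i j * Xd i * Xd j
        = (n:ℝ)^2*s + 2*(n:ℝ)^2 - 4*(n:ℝ)*s - 16*(n:ℝ) + 4*T := by
      have hexp : ∀ i, ∑ j, B i j * Xd i * Xd j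
          = g2 i * (((n:ℝ) * B i u + (n:ℝ) * B i w) + (-2) * ∑ j, B i j)
            + (-2) * (((n:ℝ) * B i u + (n:ℝ) * B i w) + (-2) * ∑ j, B i j) := by
        intro i
        rw [hpull Xd i, hinnerXd i]
        simp only [hXd]; ring
      rw [Finset.sum_congr rfl fun i _ => hexp i, Finset.sum_add_distrib, ← Finset.mul_sum]
      have h1 := hg2sum (fun i => ((n:ℝ) * B i u + (n:ℝ) * B i w) + (-2) * ∑ j, B i j)
      rw [h1]
      have h2 : ∑ i, (((n:ℝ) * B i u + (n:ℝ) * B i w) + (-2) * ∑ j, B i j)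
          = ((n:ℝ) * (d u + 2) + (n:ℝ) * (d w + 2)) + (-2) * T := by
        rw [Finset.sum_add_distrib, Finset.sum_add_distrib, ← Finset.mul_sum,
          ← Finset.mul_sum, ← Finset.mul_sum, hcsu, hcsw, ← hTrows]
      rw [h2, hBuu, hBuw, hBwu, hBww, hrsu, hrsw, hs]
      ring
    have hSd : ∑ i, (Xd i)^2 = 2*(n:ℝ)^2 - 4*(n:ℝ) := by
      have hexp2 : ∀ i, (Xd i)^2 = g2 i * g2 i + (-4) * (g2 i * 1) + 4 := by
        intro i; simp only [hXd]; ring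
      rw [Finset.sum_congr rfl fun i _ => hexp2 i, Finset.sum_add_distrib,
        Finset.sum_add_distrib, ← Finset.mul_sum, hg2sum g2, hg2sum (fun _ => 1),
        hg2u, hg2w, Finset.sum_const, Finset.card_univ, Fintype.card_fin]
      simp only [mul_one, nsmul_eq_mul]
      ring
    have hXdsum : ∑ i, Xd i = 0 := by
      have hexp3 : ∀ i, Xd i = g2 i * 1 + (-2) := by intro i; simp only [hXd, mul_one]
      rw [Finset.sum_congr rfl fun i _ => hexp3 i, Finset.sum_add_distrib,
        hg2sum (fun _ => 1), Finset.sum_const, Finset.card_univ, Fintype.card_fin]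
      simp only [mul_one, nsmul_eq_mul]
      ring
    have hXdne : Xd ≠ 0 := by
      intro h0
      have h9 : Xd u = (n:ℝ) - 2 := by rw [hXd]; simp only []; rw [hg2u]; ring
      rw [h0] at h9
      simp only [Pi.zero_apply] at h9
      linarith
    have hD' := ray_le B Xd hXdne hXdsum
    rw [hqd, hSd, ← hL] at hD'
    -- final contradiction
    by_contra hcon
    push_neg at hcon
    exact (final_arith (n:ℝ) L s T (bw G) Q hnR hbw0 hQ hC' hD' (by linarith)).elim
  -- conclude
  have hub : hB G ≤ bw G - 1/400 := by
    refine csSup_le ⟨gB G 0, 0, rfl⟩ ?_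
    rintro r ⟨d, rfl⟩
    exact key d
  linarith
end
end

section
/- Let G be a graph with n ≥ 10c vertices containing a 2×c lattice: distinct vertices u₁,…,u_c, w₁,…,w_c, u₁',…,u_c', w₁',…,w_c' such that E contains the edges {u_i', u_i}, {u_i, w_i}, {w_i, w_i'} for all 1 ≤ i ≤ c and the edges {u_i, u_{i+1}}, {w_i, w_{i+1}} for all 1 ≤ i < c, and the vertices u_i and w_i have no further edges. If there is an optimum bisection vector y (cw(y) = bw(G)) such that y_{u_i} = y_{u_i'} = +1 and y_{w_i} = y_{w_i'} = −1 for all i, then h(G) < bw(G). -/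
open Matrix BigOperators Finset

noncomputable section

lemma quad_le {n : ℕ} (B : Matrix (Fin n) (Fin n) ℝ) (z : Fin n → ℝ) :
    z ⬝ᵥ B.mulVec z ≤ (∑ i, ∑ j, |B i j|) * (∑ i, (z i)^2) := by
  have hterm : ∀ i j : Fin n, z i * (B i j * z j) ≤ |B i j| * (∑ k, (z k)^2) := by
    intro i j
    have h1 : (z i)^2 ≤ ∑ k, (z k)^2 :=
      Finset.single_le_sum (fun k _ => sq_nonneg (z k)) (Finset.mem_univ i)
    have h2 : (z j)^2 ≤ ∑ k, (z k)^2 :=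
      Finset.single_le_sum (fun k _ => sq_nonneg (z k)) (Finset.mem_univ j)
    have habs : z i * (B i j * z j) ≤ |B i j| * (|z i| * |z j|) := by
      calc z i * (B i j * z j) ≤ |z i * (B i j * z j)| := le_abs_self _
      _ = |B i j| * (|z i| * |z j|) := by rw [abs_mul, abs_mul]; ring
    refine habs.trans ?_
    have : |z i| * |z j| ≤ ∑ k, (z k)^2 := by
      nlinarith [sq_nonneg (|z i| - |z j|), sq_abs (z i), sq_abs (z j), abs_nonneg (z i), abs_nonneg (z j)]
    exact mul_le_mul_of_nonneg_left this (abs_nonneg _)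
  calc z ⬝ᵥ B.mulVec z = ∑ i, ∑ j, z i * (B i j * z j) := by
        simp [dotProduct, Matrix.mulVec, Finset.mul_sum]
  _ ≤ ∑ i, ∑ j, |B i j| * (∑ k, (z k)^2) :=
      Finset.sum_le_sum (fun i _ => Finset.sum_le_sum (fun j _ => hterm i j))
  _ = (∑ i, ∑ j, |B i j|) * (∑ i, (z i)^2) := by rw [Finset.sum_mul]; congr 1; ext i; rw [Finset.sum_mul]

lemma lamS_lower {n : ℕ} (B : Matrix (Fin n) (Fin n) ℝ) (x : Fin n → ℝ)
    (hx : x ≠ 0) (hs : ∑ i, x i = 0) :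
    (x ⬝ᵥ B.mulVec x) / (∑ i, (x i)^2) ≤ lamS B := by
  apply le_csSup
  · refine ⟨∑ i, ∑ j, |B i j|, ?_⟩
    rintro r ⟨z, hz, hzs, rfl⟩
    rw [div_le_iff₀ (sq_sum_pos z hz)]
    exact quad_le B z
  · exact ⟨x, hx, hs, rfl⟩

lemma msum_add_diag {n : ℕ} (A : Matrix (Fin n) (Fin n) ℝ) (d : Fin n → ℝ) :
    msum (A + Matrix.diagonal d) = msum A + ∑ i, d i := by
  unfold msum
  rw [← Finset.sum_add_distrib]
  congr 1; ext i
  simp [Matrix.diagonal, Finset.sum_add_distrib]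

lemma quad_add_diag {n : ℕ} (A : Matrix (Fin n) (Fin n) ℝ) (d : Fin n → ℝ) (z : Fin n → ℝ) :
    z ⬝ᵥ (A + Matrix.diagonal d).mulVec z = z ⬝ᵥ A.mulVec z + ∑ i, d i * (z i)^2 := by
  simp only [dotProduct, Matrix.mulVec, Matrix.add_apply]
  rw [← Finset.sum_add_distrib]
  congr 1; ext i
  have h2 : ∑ x : Fin n, Matrix.diagonal d i x * z x = d i * z i := by
    rw [Finset.sum_eq_single i]
    · simp [Matrix.diagonal]
    · intro b _ hb; simp [Matrix.diagonal_apply_ne' d hb]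
    · intro h; exact absurd (Finset.mem_univ i) h
  have h1 : ∑ x : Fin n, (A i x + Matrix.diagonal d i x) * z x
      = (∑ x : Fin n, A i x * z x) + ∑ x : Fin n, Matrix.diagonal d i x * z x := by
    rw [← Finset.sum_add_distrib]
    congr 1; ext x; ring
  rw [h1, h2]; ring

lemma quad_expand {n : ℕ} (A : Matrix (Fin n) (Fin n) ℝ) (z : Fin n → ℝ) :
    z ⬝ᵥ A.mulVec z = ∑ i, ∑ j, A i j * (z i * z j) := by
  simp only [dotProduct, Matrix.mulVec, Finset.mul_sum]
  refine Finset.sum_congr rfl fun i _ => Finset.sum_congr rfl fun j _ => by ring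


set_option maxHeartbeats 1600000 in
/-- a `2×c` lattice lying on an optimum bisection (with the inner
lattice vertices `u_i`, `w_i` having no further edges) forces `h(G) < bw(G)`. -/
theorem lattice_on_cut_forces_fail {n c : ℕ} (hn2 : 2 ≤ n) (hne : Even n)
    (hc : 1 ≤ c) (hn10c : 10 * c ≤ n)
    (G : SimpleGraph (Fin n)) [DecidableRel G.Adj]
    (u w u' w' : Fin c → Fin n)
    (hinj : Function.Injective (fun p : Fin 4 × Fin c => ![u, w, u', w'] p.1 p.2))
    (e1 : ∀ i, G.Adj (u' i) (u i))
    (e2 : ∀ i, G.Adj (u i) (w i))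
    (e3 : ∀ i, G.Adj (w i) (w' i))
    (e4 : ∀ i j : Fin c, (j : ℕ) = (i : ℕ) + 1 → G.Adj (u i) (u j))
    (e5 : ∀ i j : Fin c, (j : ℕ) = (i : ℕ) + 1 → G.Adj (w i) (w j))
    (hu : ∀ i z, G.Adj (u i) z ↔ z = u' i ∨ z = w i ∨
        ∃ j : Fin c, ((j : ℕ) = (i : ℕ) + 1 ∨ (i : ℕ) = (j : ℕ) + 1) ∧ z = u j)
    (hwn : ∀ i z, G.Adj (w i) z ↔ z = w' i ∨ z = u i ∨
        ∃ j : Fin c, ((j : ℕ) = (i : ℕ) + 1 ∨ (i : ℕ) = (j : ℕ) + 1) ∧ z = w j)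
    (y : Fin n → ℝ) (hy : IsBisection y) (hopt : cw G y = bw G)
    (hyu : ∀ i, y (u i) = 1) (hyu' : ∀ i, y (u' i) = 1)
    (hyw : ∀ i, y (w i) = -1) (hyw' : ∀ i, y (w' i) = -1) :
    hB G < bw G := by
  classical
  have hc0 : 0 < c := hc
  have hcR : (1:ℝ) ≤ (c:ℝ) := by exact_mod_cast hc
  have hnR : (10:ℝ) * (c:ℝ) ≤ (n:ℝ) := by exact_mod_cast hn10c
  have hden : (0:ℝ) < (n:ℝ) - 2*(c:ℝ) := by linarith
  set T : ℝ := 6*(c:ℝ)/(5*((n:ℝ) - 2*(c:ℝ))) with hTdef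
  have hT0 : 0 < T := by apply div_pos <;> linarith
  have hT : T ≤ 3/20 := by
    rw [hTdef, div_le_iff₀ (by linarith)]; linarith
  have hTmul : T * ((n:ℝ) - 2*(c:ℝ)) = 6*(c:ℝ)/5 := by
    rw [hTdef, div_mul_eq_mul_div, mul_div_mul_right _ _ hden.ne']
  have hT2 : T^2 ≤ 9/400 := by nlinarith
  set C : ℝ := Real.sqrt (1 - T^2) with hCdef
  have hC2 : C^2 = 1 - T^2 := Real.sq_sqrt (by nlinarith)
  have hC0 : 0 ≤ C := Real.sqrt_nonneg _
  have hClb : 1 - T^2 ≤ C := by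
    have h1 : (1-T^2)^2 ≤ 1 - T^2 := by nlinarith
    have := Real.sqrt_le_sqrt h1
    rwa [Real.sqrt_sq (by nlinarith)] at this
  -- injectivity helpers
  have vK : ∀ (s t : Fin 4) (k l : Fin c), ![u, w, u', w'] s k = ![u, w, u', w'] t l →
      s = t ∧ k = l := by
    intro s t k l h
    have h2 : ((s, k) : Fin 4 × Fin c) = (t, l) := hinj h
    exact ⟨congrArg Prod.fst h2, congrArg Prod.snd h2⟩
  have v0 : ![u, w, u', w'] (0 : Fin 4) = u := rfl
  have v1 : ![u, w, u', w'] (1 : Fin 4) = w := rfl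
  have v2 : ![u, w, u', w'] (2 : Fin 4) = u' := rfl
  have v3 : ![u, w, u', w'] (3 : Fin 4) = w' := rfl
  have uinj : Function.Injective u := fun k l h => (vK 0 0 k l (by rw [v0]; exact h)).2
  have winj : Function.Injective w := fun k l h => (vK 1 1 k l (by rw [v1]; exact h)).2
  have kuw : ∀ k l, u k ≠ w l := fun k l h =>
    absurd (vK 0 1 k l (by rw [v0, v1]; exact h)).1 (by decide)
  have kuu' : ∀ k l, u k ≠ u' l := fun k l h =>
    absurd (vK 0 2 k l (by rw [v0, v2]; exact h)).1 (by decide)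
  have kuw' : ∀ k l, u k ≠ w' l := fun k l h =>
    absurd (vK 0 3 k l (by rw [v0, v3]; exact h)).1 (by decide)
  have kwu' : ∀ k l, w k ≠ u' l := fun k l h =>
    absurd (vK 1 2 k l (by rw [v1, v2]; exact h)).1 (by decide)
  have kww' : ∀ k l, w k ≠ w' l := fun k l h =>
    absurd (vK 1 3 k l (by rw [v1, v3]; exact h)).1 (by decide)
  set U : Finset (Fin n) := Finset.univ.image u with hUdef
  set W : Finset (Fin n) := Finset.univ.image w with hWdef
  have memU : ∀ {i}, i ∈ U → ∃ k, u k = i := by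
    intro i hi; rw [hUdef, Finset.mem_image] at hi; obtain ⟨k, _, hk⟩ := hi; exact ⟨k, hk⟩
  have memW : ∀ {i}, i ∈ W → ∃ k, w k = i := by
    intro i hi; rw [hWdef, Finset.mem_image] at hi; obtain ⟨k, _, hk⟩ := hi; exact ⟨k, hk⟩
  have huU : ∀ k, u k ∈ U := fun k => Finset.mem_image_of_mem u (Finset.mem_univ k)
  have hwW : ∀ k, w k ∈ W := fun k => Finset.mem_image_of_mem w (Finset.mem_univ k)
  have huW : ∀ k, u k ∉ W := by
    intro k hk; obtain ⟨l, hl⟩ := memW hk; exact kuw k l hl.symm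
  have hwU : ∀ k, w k ∉ U := by
    intro k hk; obtain ⟨l, hl⟩ := memU hk; exact kuw l k hl
  have hu'U : ∀ k, u' k ∉ U := by
    intro k hk; obtain ⟨l, hl⟩ := memU hk; exact kuu' l k hl
  have hu'W : ∀ k, u' k ∉ W := by
    intro k hk; obtain ⟨l, hl⟩ := memW hk; exact kwu' l k hl
  have hw'U : ∀ k, w' k ∉ U := by
    intro k hk; obtain ⟨l, hl⟩ := memU hk; exact kuw' l k hl
  have hw'W : ∀ k, w' k ∉ W := by
    intro k hk; obtain ⟨l, hl⟩ := memW hk; exact kww' l k hl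
  have hUWd : ∀ i, i ∈ U → i ∈ W → False := by
    intro i hiU hiW; obtain ⟨k, rfl⟩ := memU hiU; exact huW k hiW
  have cardU : U.card = c := by
    rw [hUdef, Finset.card_image_of_injective _ uinj, Finset.card_univ, Fintype.card_fin]
  have cardW : W.card = c := by
    rw [hWdef, Finset.card_image_of_injective _ winj, Finset.card_univ, Fintype.card_fin]
  -- test vectors
  set a : Fin n → ℝ := fun i => if i ∈ U then 4/5 else if i ∈ W then -(4/5) else C * y i with hadef
  set b : Fin n → ℝ := fun i => if i ∈ U then 3/5 else if i ∈ W then 3/5 else -T with hbdef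
  have haU : ∀ k, a (u k) = 4/5 := by intro k; simp only [hadef]; rw [if_pos (huU k)]
  have haW : ∀ k, a (w k) = -(4/5) := by
    intro k; simp only [hadef]; rw [if_neg (hwU k), if_pos (hwW k)]
  have hbU : ∀ k, b (u k) = 3/5 := by intro k; simp only [hbdef]; rw [if_pos (huU k)]
  have hbW : ∀ k, b (w k) = 3/5 := by
    intro k; simp only [hbdef]; rw [if_neg (hwU k), if_pos (hwW k)]
  have haO : ∀ i, i ∉ U → i ∉ W → a i = C * y i := by
    intro i h1 h2; simp only [hadef]; rw [if_neg h1, if_neg h2]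
  have hbO : ∀ i, i ∉ U → i ∉ W → b i = -T := by
    intro i h1 h2; simp only [hbdef]; rw [if_neg h1, if_neg h2]
  have hau' : ∀ k, a (u' k) = C := by
    intro k; rw [haO _ (hu'U k) (hu'W k), hyu' k, mul_one]
  have haw' : ∀ k, a (w' k) = -C := by
    intro k; rw [haO _ (hw'U k) (hw'W k), hyw' k]; ring
  have hbu' : ∀ k, b (u' k) = -T := fun k => hbO _ (hu'U k) (hu'W k)
  have hbw' : ∀ k, b (w' k) = -T := fun k => hbO _ (hw'U k) (hw'W k)
  obtain ⟨hy1, hy2⟩ := hy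
  have hyUval : ∀ i, i ∈ U → y i = 1 := by
    intro i hi; obtain ⟨k, rfl⟩ := memU hi; exact hyu k
  have hyWval : ∀ i, i ∈ W → y i = -1 := by
    intro i hi; obtain ⟨k, rfl⟩ := memW hi; exact hyw k
  -- sum of a is zero
  have hsuma : ∑ i, a i = 0 := by
    have haEq : ∀ i, a i = C * y i +
        ((if i ∈ U then (4/5 - C) else 0) + (if i ∈ W then (C - 4/5) else 0)) := by
      intro i
      by_cases h1 : i ∈ U
      · have h2 : i ∉ W := fun h2 => hUWd i h1 h2
        simp only [hadef]
        rw [if_pos h1, if_pos h1, if_neg h2, hyUval i h1]; ring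
      · by_cases h2 : i ∈ W
        · simp only [hadef]
          rw [if_neg h1, if_pos h2, if_neg h1, if_pos h2, hyWval i h2]; ring
        · simp only [hadef]
          rw [if_neg h1, if_neg h2, if_neg h1, if_neg h2]; ring
    rw [Finset.sum_congr rfl (fun i _ => haEq i)]
    rw [Finset.sum_add_distrib, Finset.sum_add_distrib, ← Finset.mul_sum, hy2,
      Finset.sum_ite_mem, Finset.sum_ite_mem, Finset.univ_inter, Finset.univ_inter,
      Finset.sum_const, Finset.sum_const, cardU, cardW, nsmul_eq_mul, nsmul_eq_mul]
    ring
  -- sum of b is zero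
  have hsumb : ∑ i, b i = 0 := by
    have hbEq : ∀ i, b i = -T +
        ((if i ∈ U then (3/5 + T) else 0) + (if i ∈ W then (3/5 + T) else 0)) := by
      intro i
      by_cases h1 : i ∈ U
      · have h2 : i ∉ W := fun h2 => hUWd i h1 h2
        simp only [hbdef]; rw [if_pos h1, if_pos h1, if_neg h2]; ring
      · by_cases h2 : i ∈ W
        · simp only [hbdef]; rw [if_neg h1, if_pos h2, if_neg h1, if_pos h2]; ring
        · simp only [hbdef]; rw [if_neg h1, if_neg h2, if_neg h1, if_neg h2]; ring
    rw [Finset.sum_congr rfl (fun i _ => hbEq i)]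
    rw [Finset.sum_add_distrib, Finset.sum_add_distrib,
      Finset.sum_ite_mem, Finset.sum_ite_mem, Finset.univ_inter, Finset.univ_inter]
    simp only [Finset.sum_const, cardU, cardW, Finset.card_univ, Fintype.card_fin, nsmul_eq_mul]
    have h9 : (n:ℝ) * (-T) = -(T * ((n:ℝ) - 2*(c:ℝ))) - 2*(c:ℝ)*T := by ring
    rw [h9, hTmul]; ring
  -- pointwise norm
  have hab1 : ∀ i, a i ^ 2 + b i ^ 2 = 1 := by
    intro i
    by_cases h1 : i ∈ U
    · have h2 : i ∉ W := fun h2 => hUWd i h1 h2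
      simp only [hadef, hbdef]; rw [if_pos h1, if_pos h1]; norm_num
    · by_cases h2 : i ∈ W
      · simp only [hadef, hbdef]
        rw [if_neg h1, if_pos h2, if_neg h1, if_pos h2]; norm_num
      · simp only [hadef, hbdef]
        rw [if_neg h1, if_neg h2, if_neg h1, if_neg h2]
        have hyy : y i ^ 2 = 1 := by rcases hy1 i with h | h <;> rw [h] <;> norm_num
        have : (C * y i)^2 = C^2 * y i ^2 := by ring
        rw [this, hyy, hC2]; ring
  have hNab : (∑ i, a i ^ 2) + (∑ i, b i ^ 2) = (n:ℝ) := by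
    rw [← Finset.sum_add_distrib]
    rw [Finset.sum_congr rfl (fun i _ => hab1 i)]
    simp
  have k0 : Fin c := ⟨0, hc0⟩
  have hane : a ≠ 0 := by
    intro h
    have := congrFun h (u k0)
    rw [haU k0] at this; norm_num at this
  have hbne : b ≠ 0 := by
    intro h
    have := congrFun h (u k0)
    rw [hbU k0] at this; norm_num at this
  -- the edge-wise comparison function
  set F : Fin n × Fin n → ℝ := fun pr =>
    adjA G pr.1 pr.2 * (a pr.1 * a pr.2 + b pr.1 * b pr.2 - y pr.1 * y pr.2) with hFdef
  set φ : Fin 6 × Fin c → Fin n × Fin n := fun sk =>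
    (![u, w, u', w'] ((![2, 0, 1, 3, 0, 1] : Fin 6 → Fin 4) sk.1) sk.2,
     ![u, w, u', w'] ((![0, 2, 3, 1, 1, 0] : Fin 6 → Fin 4) sk.1) sk.2) with hφdef
  have hφ0 : ∀ k, φ (0, k) = (u' k, u k) := fun k => rfl
  have hφ1 : ∀ k, φ (1, k) = (u k, u' k) := fun k => rfl
  have hφ2 : ∀ k, φ (2, k) = (w k, w' k) := fun k => rfl
  have hφ3 : ∀ k, φ (3, k) = (w' k, w k) := fun k => rfl
  have hφ4 : ∀ k, φ (4, k) = (u k, w k) := fun k => rfl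
  have hφ5 : ∀ k, φ (5, k) = (w k, u k) := fun k => rfl
  have hφinj : Function.Injective φ := by
    rintro ⟨s, k⟩ ⟨t, l⟩ h
    simp only [hφdef, Prod.mk.injEq] at h
    have r1 := vK _ _ _ _ h.1
    have r2 := vK _ _ _ _ h.2
    have hdec : ∀ s t : Fin 6,
        (![2, 0, 1, 3, 0, 1] : Fin 6 → Fin 4) s = (![2, 0, 1, 3, 0, 1] : Fin 6 → Fin 4) t →
        (![0, 2, 3, 1, 1, 0] : Fin 6 → Fin 4) s = (![0, 2, 3, 1, 1, 0] : Fin 6 → Fin 4) t →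
        s = t := by decide
    have hst : s = t := hdec s t r1.1 r2.1
    simp [Prod.ext_iff, hst, r1.2]
  set SS : Finset (Fin n × Fin n) := Finset.univ.image φ with hSSdef
  have hadj1 : ∀ {i j : Fin n}, G.Adj i j → adjA G i j = 1 := by
    intro i j h; simp only [adjA, Matrix.of_apply]; rw [if_pos h]
  have hadj0 : ∀ {i j : Fin n}, ¬ G.Adj i j → adjA G i j = 0 := by
    intro i j h; simp only [adjA, Matrix.of_apply]; rw [if_neg h]
  have FV0 : ∀ k, F (u' k, u k) = (4/5)*C - (3/5)*T - 1 := by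
    intro k; simp only [hFdef]
    rw [hadj1 (e1 k), hau' k, haU k, hbu' k, hbU k, hyu' k, hyu k]; ring
  have FV1 : ∀ k, F (u k, u' k) = (4/5)*C - (3/5)*T - 1 := by
    intro k; simp only [hFdef]
    rw [hadj1 (e1 k).symm, hau' k, haU k, hbu' k, hbU k, hyu' k, hyu k]; ring
  have FV2 : ∀ k, F (w k, w' k) = (4/5)*C - (3/5)*T - 1 := by
    intro k; simp only [hFdef]
    rw [hadj1 (e3 k), haw' k, haW k, hbw' k, hbW k, hyw' k, hyw k]; ring
  have FV3 : ∀ k, F (w' k, w k) = (4/5)*C - (3/5)*T - 1 := by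
    intro k; simp only [hFdef]
    rw [hadj1 (e3 k).symm, haw' k, haW k, hbw' k, hbW k, hyw' k, hyw k]; ring
  have FV4 : ∀ k, F (u k, w k) = 18/25 := by
    intro k; simp only [hFdef]
    rw [hadj1 (e2 k), haU k, haW k, hbU k, hbW k, hyu k, hyw k]; ring
  have FV5 : ∀ k, F (w k, u k) = 18/25 := by
    intro k; simp only [hFdef]
    rw [hadj1 (e2 k).symm, haU k, haW k, hbU k, hbW k, hyu k, hyw k]; ring
  have hSSsum : ∑ pr ∈ SS, F pr = (c:ℝ) * (4*((4/5)*C - (3/5)*T - 1) + 36/25) := by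
    rw [hSSdef, Finset.sum_image (fun x _ x' _ h => hφinj h)]
    rw [Fintype.sum_prod_type, Fin.sum_univ_six]
    have E0 : ∑ k, F (φ (0, k)) = (c:ℝ) * ((4/5)*C - (3/5)*T - 1) := by
      rw [Finset.sum_congr rfl (fun k _ => by rw [hφ0 k, FV0 k])]
      simp [mul_comm]; ring
    have E1 : ∑ k, F (φ (1, k)) = (c:ℝ) * ((4/5)*C - (3/5)*T - 1) := by
      rw [Finset.sum_congr rfl (fun k _ => by rw [hφ1 k, FV1 k])]
      simp [mul_comm]; ring
    have E2 : ∑ k, F (φ (2, k)) = (c:ℝ) * ((4/5)*C - (3/5)*T - 1) := by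
      rw [Finset.sum_congr rfl (fun k _ => by rw [hφ2 k, FV2 k])]
      simp [mul_comm]; ring
    have E3 : ∑ k, F (φ (3, k)) = (c:ℝ) * ((4/5)*C - (3/5)*T - 1) := by
      rw [Finset.sum_congr rfl (fun k _ => by rw [hφ3 k, FV3 k])]
      simp [mul_comm]; ring
    have E4 : ∑ k, F (φ (4, k)) = (c:ℝ) * (18/25) := by
      rw [Finset.sum_congr rfl (fun k _ => by rw [hφ4 k, FV4 k])]
      simp [mul_comm]
    have E5 : ∑ k, F (φ (5, k)) = (c:ℝ) * (18/25) := by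
      rw [Finset.sum_congr rfl (fun k _ => by rw [hφ5 k, FV5 k])]
      simp [mul_comm]
    rw [E0, E1, E2, E3, E4, E5]; ring
  -- nonnegativity off the special set
  have hFnn : ∀ pr : Fin n × Fin n, pr ∉ SS → 0 ≤ F pr := by
    rintro ⟨i, j⟩ hnot
    by_cases hadj : G.Adj i j
    · by_cases hiU : i ∈ U
      · obtain ⟨k, rfl⟩ := memU hiU
        rcases (hu k j).mp hadj with hj | hj | ⟨j', _, hj⟩
        · exfalso; subst hj
          exact hnot (Finset.mem_image.mpr ⟨(1, k), Finset.mem_univ _, hφ1 k⟩)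
        · subst hj; rw [FV4 k]; norm_num
        · subst hj
          simp only [hFdef]
          rw [hadj1 hadj, haU k, haU j', hbU k, hbU j', hyu k, hyu j']; norm_num
      · by_cases hiW : i ∈ W
        · obtain ⟨k, rfl⟩ := memW hiW
          rcases (hwn k j).mp hadj with hj | hj | ⟨j', _, hj⟩
          · exfalso; subst hj
            exact hnot (Finset.mem_image.mpr ⟨(2, k), Finset.mem_univ _, hφ2 k⟩)
          · subst hj; rw [FV5 k]; norm_num
          · subst hj
            simp only [hFdef]
            rw [hadj1 hadj, haW k, haW j', hbW k, hbW j', hyw k, hyw j']; norm_num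
        · by_cases hjU : j ∈ U
          · obtain ⟨k, rfl⟩ := memU hjU
            rcases (hu k i).mp hadj.symm with hi | hi | ⟨j', _, hi⟩
            · exfalso; subst hi
              exact hnot (Finset.mem_image.mpr ⟨(0, k), Finset.mem_univ _, hφ0 k⟩)
            · subst hi; exact absurd (hwW k) hiW
            · subst hi; exact absurd (huU j') hiU
          · by_cases hjW : j ∈ W
            · obtain ⟨k, rfl⟩ := memW hjW
              rcases (hwn k i).mp hadj.symm with hi | hi | ⟨j', _, hi⟩
              · exfalso; subst hi
                exact hnot (Finset.mem_image.mpr ⟨(3, k), Finset.mem_univ _, hφ3 k⟩)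
              · subst hi; exact absurd (huU k) hiU
              · subst hi; exact absurd (hwW j') hiW
            · -- both endpoints outside the inner lattice
              simp only [hFdef]
              rw [hadj1 hadj, haO i hiU hiW, haO j hjU hjW, hbO i hiU hiW, hbO j hjU hjW]
              have hyy : y i * y j ≤ 1 := by
                rcases hy1 i with h | h <;> rcases hy1 j with h' | h' <;>
                  rw [h, h'] <;> norm_num
              have : C * y i * (C * y j) + -T * -T - y i * y j
                  = T^2 * (1 - y i * y j) + (C^2 - (1 - T^2)) * (y i * y j) := by ring
              rw [one_mul, this, hC2]
              nlinarith [sq_nonneg T]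
    · simp only [hFdef]; rw [hadj0 hadj]; ring_nf; exact le_refl 0
  -- the core lower bound
  have hcore : (26/125 : ℝ) ≤ ∑ pr : Fin n × Fin n, F pr := by
    have h1 : ∑ pr ∈ SS, F pr ≤ ∑ pr : Fin n × Fin n, F pr :=
      Finset.sum_le_sum_of_subset_of_nonneg (Finset.subset_univ _)
        (fun pr _ hpr => hFnn pr hpr)
    have h2 : (26/125 : ℝ) ≤ ∑ pr ∈ SS, F pr := by
      rw [hSSsum]
      have hM : (26/125 : ℝ) ≤ 4*((4/5)*C - (3/5)*T - 1) + 36/25 := by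
        nlinarith [hClb, hT, hT2]
      nlinarith [hM, hcR]
    linarith
  -- expansion of the core sum in terms of quadratic forms
  have hexp : ∑ pr : Fin n × Fin n, F pr
      = a ⬝ᵥ (adjA G).mulVec a + b ⬝ᵥ (adjA G).mulVec b - y ⬝ᵥ (adjA G).mulVec y := by
    rw [Fintype.sum_prod_type, quad_expand, quad_expand, quad_expand,
      ← Finset.sum_add_distrib, ← Finset.sum_sub_distrib]
    refine Finset.sum_congr rfl fun i _ => ?_
    rw [← Finset.sum_add_distrib, ← Finset.sum_sub_distrib]
    refine Finset.sum_congr rfl fun j _ => ?_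
    simp only [hFdef]; ring
  have hcw4 : 4 * cw G y = msum (adjA G) - y ⬝ᵥ (adjA G).mulVec y := by
    have hsplit : ∑ i, ∑ j, adjA G i j * (1 - y i * y j)
        = msum (adjA G) - ∑ i, ∑ j, adjA G i j * (y i * y j) := by
      unfold msum
      rw [← Finset.sum_sub_distrib]
      refine Finset.sum_congr rfl fun i _ => ?_
      rw [← Finset.sum_sub_distrib]
      refine Finset.sum_congr rfl fun j _ => by ring
    have hcwdef : cw G y = (∑ i, ∑ j, adjA G i j * (1 - y i * y j)) / 4 := rfl
    rw [hcwdef, hsplit, quad_expand]; ring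
  -- the uniform bound on gB
  have hbound : ∀ d : Fin n → ℝ, gB G d ≤ cw G y - 13/250 := by
    intro d
    have hna : (0:ℝ) < ∑ i, (a i)^2 := sq_sum_pos a hane
    have hnb : (0:ℝ) < ∑ i, (b i)^2 := sq_sum_pos b hbne
    set B : Matrix (Fin n) (Fin n) ℝ := adjA G + Matrix.diagonal d with hBdef
    have hQa : a ⬝ᵥ B.mulVec a ≤ lamS B * (∑ i, (a i)^2) := by
      have h := lamS_lower B a hane hsuma
      rw [div_le_iff₀ hna] at h; exact h
    have hQb : b ⬝ᵥ B.mulVec b ≤ lamS B * (∑ i, (b i)^2) := by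
      have h := lamS_lower B b hbne hsumb
      rw [div_le_iff₀ hnb] at h; exact h
    have hlam : a ⬝ᵥ B.mulVec a + b ⬝ᵥ B.mulVec b ≤ (n:ℝ) * lamS B := by
      have h : lamS B * (∑ i, (a i)^2) + lamS B * (∑ i, (b i)^2) = (n:ℝ) * lamS B := by
        rw [← mul_add, hNab]; ring
      linarith
    have hqa : a ⬝ᵥ B.mulVec a = a ⬝ᵥ (adjA G).mulVec a + ∑ i, d i * (a i)^2 :=
      quad_add_diag _ d a
    have hqb : b ⬝ᵥ B.mulVec b = b ⬝ᵥ (adjA G).mulVec b + ∑ i, d i * (b i)^2 :=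
      quad_add_diag _ d b
    have hdd : (∑ i, d i * (a i)^2) + (∑ i, d i * (b i)^2) = ∑ i, d i := by
      rw [← Finset.sum_add_distrib]
      refine Finset.sum_congr rfl (fun i _ => ?_)
      have h := hab1 i
      have h2 : d i * a i ^ 2 + d i * b i ^ 2 = d i * (a i ^ 2 + b i ^ 2) := by ring
      rw [h2, h, mul_one]
    have hmsum : msum B = msum (adjA G) + ∑ i, d i := msum_add_diag _ d
    have hgB : gB G d = (msum B - n * lamS B) / 4 := rfl
    rw [hgB]
    have hkey : msum B - (n:ℝ) * lamS B
        ≤ msum (adjA G) - (a ⬝ᵥ (adjA G).mulVec a + b ⬝ᵥ (adjA G).mulVec b) := by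
      rw [hmsum]
      have := hlam
      rw [hqa, hqb] at this
      linarith
    have hAcore : a ⬝ᵥ (adjA G).mulVec a + b ⬝ᵥ (adjA G).mulVec b
        ≥ y ⬝ᵥ (adjA G).mulVec y + 26/125 := by
      have := hcore; rw [hexp] at this; linarith
    have h4 : msum B - (n:ℝ) * lamS B ≤ 4 * cw G y - 26/125 := by
      rw [hcw4]; linarith
    linarith
  -- conclude
  have hne2 : gB G 0 ∈ {r | ∃ d : Fin n → ℝ, r = gB G d} := ⟨0, rfl⟩
  have hfin : hB G ≤ cw G y - 13/250 := by
    have hhB : hB G = sSup {r | ∃ d : Fin n → ℝ, r = gB G d} := rfl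
    rw [hhB]
    apply csSup_le ⟨gB G 0, hne2⟩
    rintro r ⟨d, rfl⟩
    exact hbound d
  rw [← hopt]
  linarith
end
end
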